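/- Let n ≥ 1, 0 ≤ k ≤ n, θ ∈ ℝ, and let |S_{n,k}(θ)⟩ = |0⟩^{⊗(n−k)} ⊗ ((|0⟩ + e^{iθ}|1⟩)/√2)^{⊗k}. Then ∑_{P∈𝒫̄_n} ⟨S_{n,k}(θ)|P|S_{n,k}(θ)⟩⁴ = 2^{n−k}·(1 + cos⁴θ + sin⁴θ)^k, and consequently the stabilizer 2-Rényi entropy is M₂(S_{n,k}(θ)) = −k·log₂((cos(4θ) + 7)/8). -/

import Mathlib

open MeasureTheory Matrix
open scoped BigOperators ENNReal Real ComplexConjugate ComplexOrder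

noncomputable section

namespace ThriftyShadow

/-- basis index set of the `n`-qubit Hilbert space -/
abbrev Idx (n : ℕ) := Fin n → Fin 2

/-- linear operators on the `n`-qubit Hilbert space -/
abbrev Op (n : ℕ) := Matrix (Idx n) (Idx n) ℂ

/-- index set for the `t`-th tensor power -/
abbrev TIdx (n t : ℕ) := Fin t → Idx n

/-- operators on the `t`-th tensor power -/
abbrev TMat (n t : ℕ) := Matrix (TIdx n t) (TIdx n t) ℂ

/-- the dimension `d = 2^n`, as a real number -/
def dim (n : ℕ) : ℝ := 2 ^ n

/-- tensor product of a family of operators: `(⨂ i, f i) (x,y) = ∏ i, (f i) (x i) (y i)` -/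
def tpow {n t : ℕ} (f : Fin t → Op n) : TMat n t :=
  Matrix.of fun x y => ∏ i, f i (x i) (y i)

/-- the projector `|b⟩⟨b|` onto a computational basis state -/
def ket (n : ℕ) (b : Idx n) : Op n := Matrix.single b b 1

/-- `|φ⟩⟨φ|` for a vector `φ` -/
def ketbra {n : ℕ} (φ : Idx n → ℂ) : Op n := Matrix.vecMulVec φ (star φ)

/-- a density operator: positive semidefinite with unit trace -/
def IsDensity {n : ℕ} (ρ : Op n) : Prop := ρ.PosSemidef ∧ ρ.trace = 1

/-- squared Hilbert–Schmidt norm `tr(O²)` of a Hermitian operator -/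
def hsNormSq {n : ℕ} (O : Op n) : ℝ := ((O * O).trace).re

/-- purity `tr(ρ²)` -/
def purity {n : ℕ} (ρ : Op n) : ℝ := ((ρ * ρ).trace).re

/-- fidelity `⟨φ|ρ|φ⟩` -/
def fid {n : ℕ} (ρ : Op n) (φ : Idx n → ℂ) : ℝ := (star φ ⬝ᵥ ρ.mulVec φ).re

/-- the unitary group `U(d)` on the `n`-qubit Hilbert space -/
abbrev UG (n : ℕ) := Matrix.unitaryGroup (Idx n) ℂ

instance (n : ℕ) : MeasurableSpace (UG n) := borel _

/-- entries of the `t`-fold twirl `E_{U∼μ}[U^{⊗t} A (U†)^{⊗t}]` -/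
def twirlEntry {n t : ℕ} (μ : Measure (UG n)) (A : TMat n t) (i j : TIdx n t) : ℂ :=
  ∫ U : UG n,
    (((tpow fun _ => (U : Op n)) * A * (tpow fun _ => (U : Op n)ᴴ) : TMat n t)) i j ∂μ

/-- `ν` is the Haar probability measure on `U(d)`: the (unique) left-invariant
Borel probability measure -/
def IsHaar {n : ℕ} (ν : Measure (UG n)) : Prop :=
  IsProbabilityMeasure ν ∧ ∀ V : UG n, Measure.map (fun U => V * U) ν = ν

/-- `μ` is a unitary `t`-design: its `t`-fold twirl agrees with that of the
Haar measure `ν` -/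
def IsTDesign {n : ℕ} (t : ℕ) (μ ν : Measure (UG n)) : Prop :=
  ∀ A : TMat n t, ∀ i j, twirlEntry μ A i j = twirlEntry ν A i j

/-- the single-shot shadow-estimation variance `V(O,ρ)` of a unitary 2-design `μ` -/
def Vshadow {n : ℕ} (μ : Measure (UG n)) (O ρ : Op n) : ℝ :=
  ((∫ U : UG n, ∑ b : Idx n, (((dim n + 1 : ℝ) : ℂ))^2 *
      ((tpow fun _ : Fin 3 => (U : Op n)ᴴ * ket n b * (U : Op n)) * tpow ![ρ, O, O]).trace ∂μ)
    - ((O * ρ).trace)^2).re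

/-- the cross moment operator `Ω` of a unitary ensemble given by a measure `ω` on a
parameter space together with a (unitary-valued) map `f` into operators -/
def Omega {n : ℕ} {α : Type*} [MeasurableSpace α] (ω : Measure α) (f : α → Op n) : TMat n 4 :=
  Matrix.of fun i j =>
    ∑ a : Idx n, ∑ b : Idx n,
      ∫ x, (((tpow fun _ => (f x)ᴴ) * (tpow ![ket n a, ket n a, ket n b, ket n b])
              * (tpow fun _ => f x) : TMat n 4)) i j ∂ω

/-- the reuse variance `V*(O,ρ)` of the unitary ensemble `(ω, f)` -/
def Vstar {n : ℕ} {α : Type*} [MeasurableSpace α] (ω : Measure α) (f : α → Op n)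
    (O ρ : Op n) : ℝ :=
  ((((dim n + 1 : ℝ) : ℂ))^2 * (Omega ω f * tpow ![O, ρ, O, ρ]).trace
    - ((O * ρ).trace)^2).re

/-- `V*(O,ρ)` for an ensemble which is simply a measure on the unitary group -/
def VstarU {n : ℕ} (μ : Measure (UG n)) (O ρ : Op n) : ℝ :=
  Vstar μ (fun U => (U : Op n)) O ρ

/-- `V*(O) = sup_ρ V*(O,ρ)`, supremum over density operators -/
def VstarSup {n : ℕ} {α : Type*} [MeasurableSpace α] (ω : Measure α) (f : α → Op n)
    (O : Op n) : ℝ :=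
  sSup {v | ∃ ρ : Op n, IsDensity ρ ∧ v = Vstar ω f O ρ}

/-- the single-qubit Pauli matrices `I, X, Y, Z` -/
def pauli1 : Fin 4 → Matrix (Fin 2) (Fin 2) ℂ :=
  ![1, !![0, 1; 1, 0], !![0, -Complex.I; Complex.I, 0], !![1, 0; 0, -1]]

/-- index set for `n`-qubit Pauli operators -/
abbrev PIdx (n : ℕ) := Fin n → Fin 4

/-- the `n`-qubit Pauli operator labelled by `p` -/
def pauliOp (n : ℕ) (p : PIdx n) : Op n :=
  Matrix.of fun x y => ∏ i, pauli1 (p i) (x i) (y i)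

/-- the `n`-qubit Pauli group (Pauli operators with phases `i^k`) -/
def pauliGroup (n : ℕ) : Set (Op n) :=
  {A | ∃ (k : Fin 4) (p : PIdx n), A = Complex.I ^ (k : ℕ) • pauliOp n p}

/-- the Clifford group, as the set of unitaries normalizing the Pauli group -/
def cliffordSet (n : ℕ) : Set (UG n) :=
  {U | (fun A => (U : Op n) * A * (U : Op n)ᴴ) '' pauliGroup n = pauliGroup n}

/-- `μ` is the Haar probability measure of the Clifford group, viewed as a measure on
`U(d)`: it is supported on the Clifford group and left-invariant under it -/
def IsCliffordHaar {n : ℕ} (μ : Measure (UG n)) : Prop :=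
  μ (cliffordSet n) = 1 ∧ ∀ C ∈ cliffordSet n, Measure.map (fun U => C * U) μ = μ

/-- characteristic function `Ξ_A(P) = tr(A P)` (real part) -/
def XiC {n : ℕ} (A : Op n) (p : PIdx n) : ℝ := ((A * pauliOp n p).trace).re

/-- cross characteristic function `Ξ_{ρ,O}(P) = tr(ρP) tr(OP)` -/
def crossXi {n : ℕ} (ρ O : Op n) (p : PIdx n) : ℝ := XiC ρ p * XiC O p

/-- twisted cross characteristic function `Ξ̃_{ρ,O}(P) = tr(ρ P O P)` -/
def twistXi {n : ℕ} (ρ O : Op n) (p : PIdx n) : ℝ :=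
  ((ρ * pauliOp n p * O * pauliOp n p).trace).re

/-- the quantity `V_△(O,ρ)` -/
def Vtri {n : ℕ} (O ρ : Op n) : ℝ :=
  (dim n + 1) / (dim n * (dim n + 2)) *
    ((∑ p : PIdx n, (crossXi ρ O p)^2) + ∑ p : PIdx n, twistXi ρ O p * crossXi ρ O p)

/-- `V_△(O) = sup_ρ V_△(O,ρ)` over density operators -/
def VtriSup {n : ℕ} (O : Op n) : ℝ :=
  sSup {v | ∃ ρ : Op n, IsDensity ρ ∧ v = Vtri O ρ}

/-- the sum of the `d` largest entries of a vector indexed by Pauli labels -/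
def topdSum {n : ℕ} (g : PIdx n → ℝ) : ℝ :=
  sSup {x | ∃ S : Finset (PIdx n), S.card = 2 ^ n ∧ x = ∑ p ∈ S, g p}

/-- Pauli expectation value `⟨φ|P|φ⟩` of a pure state -/
def pExp {n : ℕ} (φ : Idx n → ℂ) (p : PIdx n) : ℝ :=
  (star φ ⬝ᵥ (pauliOp n p).mulVec φ).re

/-- stabilizer 2-Rényi entropy `M₂(φ)` of a pure state -/
def M2 {n : ℕ} (φ : Idx n → ℂ) : ℝ :=
  - Real.logb 2 ((dim n)⁻¹ * ∑ p : PIdx n, (pExp φ p)^4)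

/-- stabilizer 2-Rényi entropy `M̃₂(ρ)` of a (mixed) state -/
def M2mixed {n : ℕ} (ρ : Op n) : ℝ :=
  - Real.logb 2 ((∑ p : PIdx n, (XiC ρ p)^4) / (dim n * purity ρ))

/-- the T gate -/
def Tgate : Matrix (Fin 2) (Fin 2) ℂ :=
  !![1, 0; 0, Complex.exp (Complex.I * (Real.pi / 4))]

/-- the Hadamard gate -/
def Hgate : Matrix (Fin 2) (Fin 2) ℂ :=
  ((Real.sqrt 2 : ℂ))⁻¹ • !![1, 1; 1, -1]

/-- a single-qubit gate `A` applied in parallel to the last `k` qubits -/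
def layer (n k : ℕ) (A : Matrix (Fin 2) (Fin 2) ℂ) : Op n :=
  Matrix.of fun x y =>
    ∏ i : Fin n, (if (i : ℕ) < n - k then (1 : Matrix (Fin 2) (Fin 2) ℂ) else A) (x i) (y i)

/-- the interleaved Clifford–T circuit `U_l T̂_k U_{l-1} T̂_k ⋯ T̂_k U_0` -/
def circuit (n k : ℕ) : (l : ℕ) → (Fin (l + 1) → UG n) → Op n
  | 0 => fun Us => (Us 0 : Op n)
  | (l + 1) => fun Us =>
      (Us (Fin.last (l + 1)) : Op n) * layer n k Tgate * circuit n k l (fun i => Us i.castSucc)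


/-- the computational basis state `|0…0⟩` as a vector -/
def e0 (n : ℕ) : Idx n → ℂ := fun b => if b = (fun _ => (0 : Fin 2)) then 1 else 0

end ThriftyShadow


open ThriftyShadow

/-- the product state `|S_{n,k}(θ)⟩ = |0⟩^{⊗(n-k)} ⊗ ((|0⟩+e^{iθ}|1⟩)/√2)^{⊗k}` -/
def sState (n k : ℕ) (θ : ℝ) : Idx n → ℂ := fun b =>
  ∏ i : Fin n,
    if (i : ℕ) < n - k then (if b i = 0 then (1 : ℂ) else 0)
    else (if b i = 0 then ((Real.sqrt 2 : ℂ))⁻¹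
          else Complex.exp (Complex.I * θ) * ((Real.sqrt 2 : ℂ))⁻¹)


namespace SREaux

open ThriftyShadow

/-- single-qubit factors of the state -/
def sg (n k : ℕ) (θ : ℝ) (i : Fin n) : Fin 2 → ℂ := fun a =>
    if (i : ℕ) < n - k then (if a = 0 then (1 : ℂ) else 0)
    else (if a = 0 then ((Real.sqrt 2 : ℂ))⁻¹
          else Complex.exp (Complex.I * θ) * ((Real.sqrt 2 : ℂ))⁻¹)

/-- single-qubit Pauli expectations (real) -/
def sr (n k : ℕ) (θ : ℝ) (i : Fin n) : Fin 4 → ℝ := fun c =>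
  if (i : ℕ) < n - k then (![1,0,0,1] : Fin 4 → ℝ) c else ![1, Real.cos θ, Real.sin θ, 0] c

lemma single_qubit (n k : ℕ) (θ : ℝ) (i : Fin n) (c : Fin 4) :
    ∑ a : Fin 2, ∑ b : Fin 2, conj (sg n k θ i a) * pauli1 c a b * sg n k θ i b
      = ((sr n k θ i c : ℝ) : ℂ) := by
  have h2 : ((Real.sqrt 2 : ℂ))⁻¹ * ((Real.sqrt 2 : ℂ))⁻¹ = (2:ℂ)⁻¹ := by
    rw [← mul_inv, ← Complex.ofReal_mul, Real.mul_self_sqrt (by norm_num)]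
    norm_num
  have he : Complex.exp (Complex.I * θ) = Complex.cos θ + Complex.sin θ * Complex.I := by
    rw [mul_comm, Complex.exp_mul_I]
  unfold sg sr
  by_cases h : (i : ℕ) < n - k <;> simp only [h, if_true, if_false] <;>
    fin_cases c <;>
    simp [Fin.sum_univ_two, pauli1, Matrix.one_apply, he, _root_.map_mul, Complex.ext_iff] <;>
    ring_nf <;>
    simp [Complex.ext_iff, Complex.cos_ofReal_re, Complex.sin_ofReal_re] <;> ring_nf <;>
    nlinarith [Real.sin_sq_add_cos_sq θ, Real.sq_sqrt (by norm_num : (2:ℝ)≥0)]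

lemma quad {n : ℕ} (h : Fin n → Fin 2 → Fin 2 → ℂ) :
    ∑ x : Fin n → Fin 2, ∑ y : Fin n → Fin 2, ∏ i, h i (x i) (y i)
      = ∏ i, ∑ a, ∑ b, h i a b := by
  calc ∑ x : Fin n → Fin 2, ∑ y : Fin n → Fin 2, ∏ i, h i (x i) (y i)
      = ∑ x : Fin n → Fin 2, ∏ i, ∑ b, h i (x i) b :=
        Finset.sum_congr rfl fun x _ => (Fintype.prod_sum fun i b => h i (x i) b).symm
    _ = ∏ i, ∑ a, ∑ b, h i a b := (Fintype.prod_sum fun i a => ∑ b, h i a b).symm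

lemma fin_filter_card (n m : ℕ) (h : m ≤ n) :
    (Finset.univ.filter fun i : Fin n => (i:ℕ) < m).card = m := by
  rw [Finset.card_filter]
  rw [Fin.sum_univ_eq_sum_range (fun j => if j < m then 1 else 0)]
  rw [← Finset.card_filter]
  have : (Finset.range n).filter (fun j => j < m) = Finset.range m := by
    ext j; simp [Finset.mem_range]; omega
  rw [this, Finset.card_range]

set_option maxHeartbeats 1000000 in
lemma pExp_sState (n k : ℕ) (θ : ℝ) (p : PIdx n) :
    pExp (sState n k θ) p = ∏ i, sr n k θ i (p i) := by
  have hφ : ∀ b : Idx n, sState n k θ b = ∏ i, sg n k θ i (b i) := fun _ => rfl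
  have hP : ∀ x y : Idx n, pauliOp n p x y = ∏ i, pauli1 (p i) (x i) (y i) := fun _ _ => rfl
  have key : star (sState n k θ) ⬝ᵥ (pauliOp n p).mulVec (sState n k θ)
      = ((∏ i, sr n k θ i (p i) : ℝ) : ℂ) := by
    calc star (sState n k θ) ⬝ᵥ (pauliOp n p).mulVec (sState n k θ)
        = ∑ x : Idx n, ∑ y : Idx n,
            ∏ i, (conj (sg n k θ i (x i)) * pauli1 (p i) (x i) (y i) * sg n k θ i (y i)) := by
          simp only [dotProduct, Matrix.mulVec, Pi.star_apply, Finset.mul_sum]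
          refine Finset.sum_congr rfl fun x _ => Finset.sum_congr rfl fun y _ => ?_
          rw [hφ, hφ, hP, RCLike.star_def, map_prod, ← Finset.prod_mul_distrib,
            ← Finset.prod_mul_distrib]
          exact Finset.prod_congr rfl fun i _ => by ring
      _ = ∏ i, ∑ a, ∑ b, conj (sg n k θ i a) * pauli1 (p i) a b * sg n k θ i b :=
          quad (fun i a b => conj (sg n k θ i a) * pauli1 (p i) a b * sg n k θ i b)
      _ = ∏ i, ((sr n k θ i (p i) : ℝ) : ℂ) :=
          Finset.prod_congr rfl fun i _ => single_qubit n k θ i (p i)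
      _ = ((∏ i, sr n k θ i (p i) : ℝ) : ℂ) := by rw [Complex.ofReal_prod]
  rw [pExp, key, Complex.ofReal_re]

lemma sum_pow4 (n k : ℕ) (hk : k ≤ n) (θ : ℝ) :
    ∑ p : PIdx n, (pExp (sState n k θ) p) ^ 4
      = 2 ^ (n - k) * (1 + Real.cos θ ^ 4 + Real.sin θ ^ 4) ^ k := by
  have hcard1 : (Finset.univ.filter fun i : Fin n => (i:ℕ) < n - k).card = n - k :=
    fin_filter_card n (n - k) (by omega)
  have hcard2 : (Finset.univ.filter fun i : Fin n => ¬ (i:ℕ) < n - k).card = k := by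
    have h := Finset.card_filter_add_card_filter_not
      (s := (Finset.univ : Finset (Fin n))) (p := fun i : Fin n => (i:ℕ) < n - k)
    rw [hcard1, Finset.card_univ, Fintype.card_fin] at h
    omega
  calc ∑ p : PIdx n, (pExp (sState n k θ) p) ^ 4
      = ∑ p : PIdx n, ∏ i, (sr n k θ i (p i)) ^ 4 := by
        refine Finset.sum_congr rfl fun p _ => ?_
        rw [pExp_sState, ← Finset.prod_pow]
    _ = ∏ i, ∑ c, (sr n k θ i c) ^ 4 :=
        (Fintype.prod_sum fun i c => (sr n k θ i c) ^ 4).symm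
    _ = ∏ i : Fin n, (if (i:ℕ) < n - k then (2:ℝ)
          else 1 + Real.cos θ ^ 4 + Real.sin θ ^ 4) := by
        refine Finset.prod_congr rfl fun i _ => ?_
        unfold sr
        by_cases h : (i:ℕ) < n - k <;> simp [h, Fin.sum_univ_four] <;> ring
    _ = 2 ^ (n - k) * (1 + Real.cos θ ^ 4 + Real.sin θ ^ 4) ^ k := by
        rw [Finset.prod_ite (fun _ => (2:ℝ)) (fun _ => 1 + Real.cos θ ^ 4 + Real.sin θ ^ 4),
          Finset.prod_const, Finset.prod_const, hcard1, hcard2]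

end SREaux

/-- characteristic-function norms and stabilizer 2-Rényi entropy of
the states `|S_{n,k}(θ)⟩`. -/
theorem sState_SRE (n k : ℕ) (hn : 1 ≤ n) (hk : k ≤ n) (θ : ℝ) :
    (∑ p : PIdx n, (pExp (sState n k θ) p) ^ 4
      = 2 ^ (n - k) * (1 + Real.cos θ ^ 4 + Real.sin θ ^ 4) ^ k)
    ∧ M2 (sState n k θ) = -(k : ℝ) * Real.logb 2 ((Real.cos (4 * θ) + 7) / 8) := by
  have h1 := SREaux.sum_pow4 n k hk θ
  refine ⟨h1, ?_⟩
  have hA : 1 + Real.cos θ ^ 4 + Real.sin θ ^ 4 = (Real.cos (4 * θ) + 7) / 4 := by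
    have e1 : Real.cos (4 * θ) = 2 * Real.cos (2 * θ) ^ 2 - 1 := by
      rw [show (4:ℝ) * θ = 2 * (2 * θ) by ring, Real.cos_two_mul]
    have e2 : Real.cos (2 * θ) = 2 * Real.cos θ ^ 2 - 1 := Real.cos_two_mul θ
    have e3 := Real.sin_sq_add_cos_sq θ
    nlinarith [e3]
  have key : (dim n)⁻¹ * ∑ p : PIdx n, (pExp (sState n k θ) p) ^ 4
      = ((Real.cos (4 * θ) + 7) / 8) ^ k := by
    rw [h1, hA, dim]
    have hp : (2:ℝ) ^ (n - k) * 2 ^ k = 2 ^ n := by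
      rw [← pow_add]; congr 1; omega
    have h2n : (2:ℝ) ^ (n - k) = 2 ^ n / 2 ^ k := by
      rw [eq_div_iff (by positivity), hp]
    rw [h2n, show ((Real.cos (4 * θ) + 7) / 8) = ((Real.cos (4 * θ) + 7) / 4) / 2 by ring,
      div_pow]
    field_simp
    rw [← mul_pow, ← mul_pow]; congr 1; ring
  rw [M2, key, Real.logb_pow]
  ring
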